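/- Let Δ be a φ-saturated set of modal formulas in the logic S4 generated by H_S4, and define v_Δ from formulas to {0,1,2} by: v_Δ(α) = 2 if □α ∈ Δ; v_Δ(α) = 1 if □α ∉ Δ but α ∈ Δ; v_Δ(α) = 0 if □α ∉ Δ and α ∉ Δ. Then v_Δ is a valuation over the Nmatrix M'_S4. -/

import Mathlib

/-- Modal formulas over signature Σ = {¬, □, →, ∨, ∧}. -/
inductive MF
  | var : ℕ → MF
  | neg : MF → MF
  | box : MF → MF
  | imp : MF → MF → MF
  | dis : MF → MF → MF
  | con : MF → MF → MF
deriving DecidableEq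

/-- The three truth values 0, 1, 2. -/
inductive V3
  | z | o | t
deriving DecidableEq

/-- Designated values D = {1, 2}. -/
def Des : Set V3 := {V3.o, V3.t}

def negOp : V3 → Set V3
  | .z => {.o, .t}
  | .o => {.z}
  | .t => {.z}

def boxOp : V3 → Set V3
  | .z => {.z}
  | .o => {.z}
  | .t => {.t}

def impOp : V3 → V3 → Set V3
  | .z, .z => {.o, .t}
  | .z, .o => {.o, .t}
  | .z, .t => {.t}
  | .o, .z => {.z}
  | .o, .o => {.o, .t}
  | .o, .t => {.t}
  | .t, .z => {.z}
  | .t, .o => {.o}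
  | .t, .t => {.t}

def disOp : V3 → V3 → Set V3
  | .z, .z => {.z}
  | .z, .o => {.o, .t}
  | .o, .z => {.o, .t}
  | .o, .o => {.o, .t}
  | _, _ => {.t}

def conOp : V3 → V3 → Set V3
  | .z, _ => {.z}
  | _, .z => {.z}
  | .t, .t => {.t}
  | _, _ => {.o}

/-- Valuations over the reduced Nmatrix M'_S4. -/
def IsVal (v : MF → V3) : Prop :=
  (∀ α, v (.neg α) ∈ negOp (v α)) ∧
  (∀ α, v (.box α) ∈ boxOp (v α)) ∧
  (∀ α β, v (.imp α β) ∈ impOp (v α) (v β)) ∧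
  (∀ α β, v (.dis α β) ∈ disOp (v α) (v β)) ∧
  (∀ α β, v (.con α β) ∈ conOp (v α) (v β))

/-- The levels L_k. -/
def LevelS4 : ℕ → Set (MF → V3)
  | 0 => {v | IsVal v}
  | (k+1) => {v ∈ LevelS4 k | ∀ α, (∀ w ∈ LevelS4 k, w α ∈ Des) → v α = V3.t}

/-- Level valuations L'_S4 = ⋂_{k ≥ 0} L_k. -/
def LVS4 : Set (MF → V3) := ⋂ k, LevelS4 k

/-- Theorems of the Hilbert calculus H_S4 : classical propositional axioms over
{¬,→,∨,∧}, plus K, T, 4, with modus ponens and necessitation. -/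
inductive S4Thm : MF → Prop
  | ax1 (α β : MF) : S4Thm (α.imp (β.imp α))
  | ax2 (α β γ : MF) : S4Thm ((α.imp (β.imp γ)).imp ((α.imp β).imp (α.imp γ)))
  | ax3 (α β : MF) : S4Thm (α.imp (β.imp (α.con β)))
  | ax4 (α β : MF) : S4Thm ((α.con β).imp α)
  | ax5 (α β : MF) : S4Thm ((α.con β).imp β)
  | ax6 (α β : MF) : S4Thm (α.imp (α.dis β))
  | ax7 (α β : MF) : S4Thm (β.imp (α.dis β))
  | ax8 (α β γ : MF) : S4Thm ((α.imp γ).imp ((β.imp γ).imp ((α.dis β).imp γ)))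
  | ax9 (α β : MF) : S4Thm ((β.imp α).imp ((β.imp α.neg).imp β.neg))
  | ax10 (α β : MF) : S4Thm (α.imp (α.neg.imp β))
  | dne (α : MF) : S4Thm (α.neg.neg.imp α)
  | axK (α β : MF) : S4Thm ((α.imp β).box.imp (α.box.imp β.box))
  | axT (α : MF) : S4Thm (α.box.imp α)
  | axFour (α : MF) : S4Thm (α.box.imp α.box.box)
  | mp {α β : MF} : S4Thm (α.imp β) → S4Thm α → S4Thm β
  | nec {α : MF} : S4Thm α → S4Thm α.box

/-- Γ ⊢_S4 φ : either φ is a theorem, or some β₁,…,βₙ ∈ Γ (n ≥ 1) give a theorem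
β₁ → (β₂ → (… → (βₙ → φ)…)). -/
def S4Deriv (Γ : Set MF) (φ : MF) : Prop :=
  S4Thm φ ∨ ∃ l : List MF, l ≠ [] ∧ (∀ β ∈ l, β ∈ Γ) ∧ S4Thm (l.foldr MF.imp φ)

/-- Δ is φ-saturated (w.r.t. ⊢_S4). -/
def SatS4 (Δ : Set MF) (φ : MF) : Prop :=
  ¬ S4Deriv Δ φ ∧ ∀ α ∉ Δ, S4Deriv (insert α Δ) φ

open Classical in
/-- The canonical function v_Δ. -/
noncomputable def vDeltaS4 (Δ : Set MF) : MF → V3 :=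
  fun α => if MF.box α ∈ Δ then V3.t else if α ∈ Δ then V3.o else V3.z

/-- Λ is closed under (immediate, hence all) subformulas. -/
def SubClosed (Λ : Set MF) : Prop :=
  (∀ α, MF.neg α ∈ Λ → α ∈ Λ) ∧
  (∀ α, MF.box α ∈ Λ → α ∈ Λ) ∧
  (∀ α β, MF.imp α β ∈ Λ → α ∈ Λ ∧ β ∈ Λ) ∧
  (∀ α β, MF.dis α β ∈ Λ → α ∈ Λ ∧ β ∈ Λ) ∧
  (∀ α β, MF.con α β ∈ Λ → α ∈ Λ ∧ β ∈ Λ)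

/-- Partial valuations with domain Λ (modelled as total functions constrained on Λ). -/
def IsPVal (Λ : Set MF) (v : MF → V3) : Prop :=
  (∀ α, MF.neg α ∈ Λ → v (.neg α) ∈ negOp (v α)) ∧
  (∀ α, MF.box α ∈ Λ → v (.box α) ∈ boxOp (v α)) ∧
  (∀ α β, MF.imp α β ∈ Λ → v (.imp α β) ∈ impOp (v α) (v β)) ∧
  (∀ α β, MF.dis α β ∈ Λ → v (.dis α β) ∈ disOp (v α) (v β)) ∧
  (∀ α β, MF.con α β ∈ Λ → v (.con α β) ∈ conOp (v α) (v β))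

/-- PLV'(Λ): partial' level valuations over Λ (witnesses amongst level valuations). -/
def PLV' (Λ : Set MF) : Set (MF → V3) :=
  {v | IsPVal Λ v ∧ ∀ α ∈ Λ, v α = V3.o →
    ∃ w ∈ LVS4, w α = V3.z ∧ ∀ β ∈ Λ, v β = V3.t → w β = V3.t}

/-- PLV(Λ): partial level valuations over Λ, defined as the largest subset of
PV(Λ) whose condition is witnessed inside itself. -/
def PLV (Λ : Set MF) : Set (MF → V3) :=
  ⋃₀ {S | (∀ v ∈ S, IsPVal Λ v) ∧
      ∀ v ∈ S, ∀ α ∈ Λ, v α = V3.o →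
        ∃ w ∈ S, w α = V3.z ∧ ∀ β ∈ Λ, v β = V3.t → w β = V3.t}

/-- Set of subformulas of a modal formula. -/
def MF.subf : MF → Finset MF
  | .var n => {.var n}
  | .neg α => insert (.neg α) α.subf
  | .box α => insert (.box α) α.subf
  | .imp α β => insert (.imp α β) (α.subf ∪ β.subf)
  | .dis α β => insert (.dis α β) (α.subf ∪ β.subf)
  | .con α β => insert (.con α β) (α.subf ∪ β.subf)
section AuxProof

open MF S4Thm

theorem thmId (α : MF) : S4Thm (α.imp α) :=
  ((S4Thm.ax2 α (α.imp α) α).mp (S4Thm.ax1 α (α.imp α))).mp (S4Thm.ax1 α α)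

theorem thmUp {A B : MF} (h : S4Thm B) : S4Thm (A.imp B) := (S4Thm.ax1 B A).mp h

theorem thmSyl {A B C : MF} (h1 : S4Thm (B.imp C)) (h2 : S4Thm (A.imp B)) :
    S4Thm (A.imp C) := ((S4Thm.ax2 A B C).mp (thmUp h1)).mp h2

theorem thmLift {A B C : MF} (h : S4Thm (A.imp B)) :
    S4Thm ((C.imp A).imp (C.imp B)) := (S4Thm.ax2 C A B).mp (thmUp h)

theorem thmExch {A B C : MF} (h : S4Thm (A.imp (B.imp C))) :
    S4Thm (B.imp (A.imp C)) :=
  thmSyl ((S4Thm.ax2 A B C).mp h) (S4Thm.ax1 B A)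

theorem thmKdist {A B : MF} (h : S4Thm (A.imp B)) : S4Thm (A.box.imp B.box) :=
  (S4Thm.axK A B).mp (S4Thm.nec h)

theorem foldr_intro {γ : MF} (h : S4Thm γ) : ∀ l : List MF, S4Thm (l.foldr MF.imp γ)
  | [] => h
  | _ :: l => thmUp (foldr_intro h l)

theorem foldr_pull (γ : MF) : ∀ l : List MF, S4Thm (γ.imp (l.foldr MF.imp γ))
  | [] => thmId γ
  | x :: l => thmSyl (S4Thm.ax1 (l.foldr MF.imp γ) x) (foldr_pull γ l)

theorem foldr_weak (γ : MF) (l2 : List MF) :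
    ∀ l1 : List MF, S4Thm ((l1.foldr MF.imp γ).imp ((l1 ++ l2).foldr MF.imp γ))
  | [] => foldr_pull γ l2
  | _ :: l1 => thmLift (foldr_weak γ l2 l1)

theorem foldrS (γ δ : MF) :
    ∀ l : List MF, S4Thm ((l.foldr MF.imp (γ.imp δ)).imp
      ((l.foldr MF.imp γ).imp (l.foldr MF.imp δ)))
  | [] => thmId _
  | x :: l => thmSyl (S4Thm.ax2 x (l.foldr MF.imp γ) (l.foldr MF.imp δ)) (thmLift (foldrS γ δ l))

/-- Hilbert-style derivability from hypotheses (no necessitation on premises). -/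
inductive HDeriv (Γ : Set MF) : MF → Prop
  | prem {α} : α ∈ Γ → HDeriv Γ α
  | thm {α} : S4Thm α → HDeriv Γ α
  | mp {α β} : HDeriv Γ (α.imp β) → HDeriv Γ α → HDeriv Γ β

theorem hderiv_foldr {Γ : Set MF} :
    ∀ l : List MF, ∀ φ : MF, (∀ β ∈ l, β ∈ Γ) →
      HDeriv Γ (l.foldr MF.imp φ) → HDeriv Γ φ
  | [], _, _, h => h
  | x :: l, φ, hm, h =>
      hderiv_foldr l φ (fun β hb => hm β (List.mem_cons_of_mem x hb))
        (h.mp (.prem (hm x List.mem_cons_self)))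

theorem hderiv_of_s4 {Γ : Set MF} {φ : MF} (h : S4Deriv Γ φ) : HDeriv Γ φ := by
  rcases h with h | ⟨l, _, hm, ht⟩
  · exact .thm h
  · exact hderiv_foldr l φ hm (.thm ht)

theorem s4_of_hderiv {Γ : Set MF} {φ : MF} (h : HDeriv Γ φ) : S4Deriv Γ φ := by
  induction h with
  | prem h => exact Or.inr ⟨[_], by simp, by simpa, thmId _⟩
  | thm h => exact Or.inl h
  | @mp α β _ _ ih1 ih2 =>
      rcases ih1 with h1 | ⟨l1, hne1, hm1, ht1⟩
      · rcases ih2 with h2 | ⟨l2, hne2, hm2, ht2⟩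
        · exact Or.inl (h1.mp h2)
        · exact Or.inr ⟨l2, hne2, hm2, ((foldrS α β l2).mp (foldr_intro h1 l2)).mp ht2⟩
      · rcases ih2 with h2 | ⟨l2, hne2, hm2, ht2⟩
        · exact Or.inr ⟨l1, hne1, hm1, ((foldrS α β l1).mp ht1).mp (foldr_intro h2 l1)⟩
        · refine Or.inr ⟨l1 ++ l2, by simp [hne1], ?_, ?_⟩
          · intro β hb
            rcases List.mem_append.mp hb with hb | hb
            exacts [hm1 β hb, hm2 β hb]
          · have hA : S4Thm ((l1 ++ l2).foldr MF.imp (α.imp β)) :=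
              (foldr_weak (α.imp β) l2 l1).mp ht1
            have hB : S4Thm ((l1 ++ l2).foldr MF.imp α) := by
              rw [List.foldr_append]; exact foldr_intro ht2 l1
            exact ((foldrS α β (l1 ++ l2)).mp hA).mp hB

theorem hderiv_mono {Γ Γ' : Set MF} {φ : MF} (hs : Γ ⊆ Γ') (h : HDeriv Γ φ) :
    HDeriv Γ' φ := by
  induction h with
  | prem h => exact .prem (hs h)
  | thm h => exact .thm h
  | mp _ _ ih1 ih2 => exact ih1.mp ih2

theorem hderiv_ded {Γ : Set MF} {α β : MF} (h : HDeriv (insert α Γ) β) :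
    HDeriv Γ (α.imp β) := by
  induction h with
  | @prem γ hγ =>
      rcases hγ with rfl | hγ
      · exact .thm (thmId γ)
      · exact .mp (.thm (S4Thm.ax1 _ α)) (.prem hγ)
  | thm h => exact .thm (thmUp h)
  | @mp γ δ _ _ ih1 ih2 => exact (HDeriv.mp (.thm (S4Thm.ax2 α γ δ)) ih1).mp ih2

theorem hderiv_syl {Γ : Set MF} {A B C : MF} (h1 : HDeriv Γ (A.imp B))
    (h2 : HDeriv Γ (B.imp C)) : HDeriv Γ (A.imp C) :=
  (HDeriv.mp (.thm (S4Thm.ax2 A B C)) ((HDeriv.mp (.thm (S4Thm.ax1 (B.imp C) A))) h2)).mp h1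

theorem hderiv_contra {Γ : Set MF} {A B : MF} (h : HDeriv Γ (A.imp B)) :
    HDeriv Γ (B.neg.imp A.neg) := by
  apply hderiv_ded
  have hAB : HDeriv (insert B.neg Γ) (A.imp B) := hderiv_mono (Set.subset_insert _ _) h
  have hnB : HDeriv (insert B.neg Γ) B.neg := .prem (Set.mem_insert _ _)
  exact (HDeriv.mp (.thm (S4Thm.ax9 B A)) hAB).mp (.mp (.thm (S4Thm.ax1 B.neg A)) hnB)

variable {Δ : Set MF} {φ : MF}

theorem sat_notphi (h : SatS4 Δ φ) : ¬ HDeriv Δ φ := fun d => h.1 (s4_of_hderiv d)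

theorem sat_clos (h : SatS4 Δ φ) {α : MF} (d : HDeriv Δ α) : α ∈ Δ := by
  by_contra hn
  exact sat_notphi h ((hderiv_ded (hderiv_of_s4 (h.2 α hn))).mp d)

theorem sat_thm (h : SatS4 Δ φ) {α : MF} (ht : S4Thm α) : α ∈ Δ := sat_clos h (.thm ht)

theorem sat_mp (h : SatS4 Δ φ) {α β : MF} (h1 : α.imp β ∈ Δ) (h2 : α ∈ Δ) : β ∈ Δ :=
  sat_clos h (.mp (.prem h1) (.prem h2))

theorem sat_T (h : SatS4 Δ φ) {α : MF} (hb : α.box ∈ Δ) : α ∈ Δ :=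
  sat_mp h (sat_thm h (S4Thm.axT α)) hb

theorem sat_notboth (h : SatS4 Δ φ) {α : MF} (h1 : α ∈ Δ) (h2 : α.neg ∈ Δ) : False :=
  sat_notphi h ((HDeriv.mp (.thm (S4Thm.ax10 α φ)) (.prem h1)).mp (.prem h2))

theorem sat_neg (h : SatS4 Δ φ) {α : MF} (hn : α ∉ Δ) : α.neg ∈ Δ := by
  by_contra hn2
  have d1 : HDeriv Δ (α.imp φ) := hderiv_ded (hderiv_of_s4 (h.2 α hn))
  have d2 : HDeriv Δ (α.neg.imp φ) := hderiv_ded (hderiv_of_s4 (h.2 α.neg hn2))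
  have c3 : HDeriv Δ (φ.neg.imp φ) := hderiv_syl (hderiv_contra d1) d2
  have c4 : HDeriv Δ φ.neg.neg :=
    (HDeriv.mp (.thm (S4Thm.ax9 φ φ.neg)) c3).mp (.thm (thmId φ.neg))
  exact sat_notphi h (.mp (.thm (S4Thm.dne φ)) c4)

theorem sat_impL (h : SatS4 Δ φ) {α β : MF} (hn : α ∉ Δ) : α.imp β ∈ Δ :=
  sat_mp h (sat_thm h (thmExch (S4Thm.ax10 α β))) (sat_neg h hn)

theorem sat_impR (h : SatS4 Δ φ) {α β : MF} (hb : β ∈ Δ) : α.imp β ∈ Δ :=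
  sat_mp h (sat_thm h (S4Thm.ax1 β α)) hb

theorem sat_boxImp (h : SatS4 Δ φ) {α β : MF} (hb : β.box ∈ Δ) : (α.imp β).box ∈ Δ :=
  sat_mp h (sat_thm h (thmKdist (S4Thm.ax1 β α))) hb

theorem sat_disL (h : SatS4 Δ φ) {α β : MF} (ha : α ∈ Δ) : α.dis β ∈ Δ :=
  sat_mp h (sat_thm h (S4Thm.ax6 α β)) ha

theorem sat_disR (h : SatS4 Δ φ) {α β : MF} (hb : β ∈ Δ) : α.dis β ∈ Δ :=
  sat_mp h (sat_thm h (S4Thm.ax7 α β)) hb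

theorem sat_boxDisL (h : SatS4 Δ φ) {α β : MF} (ha : α.box ∈ Δ) : (α.dis β).box ∈ Δ :=
  sat_mp h (sat_thm h (thmKdist (S4Thm.ax6 α β))) ha

theorem sat_boxDisR (h : SatS4 Δ φ) {α β : MF} (hb : β.box ∈ Δ) : (α.dis β).box ∈ Δ :=
  sat_mp h (sat_thm h (thmKdist (S4Thm.ax7 α β))) hb

theorem sat_notDis (h : SatS4 Δ φ) {α β : MF} (ha : α ∉ Δ) (hb : β ∉ Δ) :
    α.dis β ∉ Δ := by
  intro hm
  have h3 : (α.dis β).imp β ∈ Δ :=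
    sat_mp h (sat_mp h (sat_thm h (S4Thm.ax8 α β β)) (sat_impL h ha))
      (sat_thm h (thmId β))
  exact hb (sat_mp h h3 hm)

theorem sat_con (h : SatS4 Δ φ) {α β : MF} (ha : α ∈ Δ) (hb : β ∈ Δ) : α.con β ∈ Δ :=
  sat_mp h (sat_mp h (sat_thm h (S4Thm.ax3 α β)) ha) hb

theorem sat_conL (h : SatS4 Δ φ) {α β : MF} (hm : α.con β ∈ Δ) : α ∈ Δ :=
  sat_mp h (sat_thm h (S4Thm.ax4 α β)) hm

theorem sat_conR (h : SatS4 Δ φ) {α β : MF} (hm : α.con β ∈ Δ) : β ∈ Δ :=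
  sat_mp h (sat_thm h (S4Thm.ax5 α β)) hm

theorem sat_boxCon (h : SatS4 Δ φ) {α β : MF} (ha : α.box ∈ Δ) (hb : β.box ∈ Δ) :
    (α.con β).box ∈ Δ := by
  have h1 : (β.imp (α.con β)).box ∈ Δ := sat_mp h (sat_thm h (thmKdist (S4Thm.ax3 α β))) ha
  exact sat_mp h (sat_mp h (sat_thm h (S4Thm.axK β (α.con β))) h1) hb

theorem sat_boxConL (h : SatS4 Δ φ) {α β : MF} (hm : (α.con β).box ∈ Δ) : α.box ∈ Δ :=
  sat_mp h (sat_thm h (thmKdist (S4Thm.ax4 α β))) hm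

theorem sat_boxConR (h : SatS4 Δ φ) {α β : MF} (hm : (α.con β).box ∈ Δ) : β.box ∈ Δ :=
  sat_mp h (sat_thm h (thmKdist (S4Thm.ax5 α β))) hm

end AuxProof
/-- the canonical function v_Δ of a φ-saturated set Δ in S4 is a
valuation over the Nmatrix M'_S4. -/
theorem vDelta_is_valuation (Δ : Set MF) (φ : MF) (h : SatS4 Δ φ) :
    IsVal (vDeltaS4 Δ) := by
  refine ⟨?_, ?_, ?_, ?_, ?_⟩
  · -- negation
    intro α
    by_cases ha : α ∈ Δ
    · have hna : α.neg ∉ Δ := fun hm => sat_notboth h ha hm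
      have hbna : (MF.neg α).box ∉ Δ := fun hm => hna (sat_T h hm)
      by_cases hba : α.box ∈ Δ <;>
        simp [vDeltaS4, ha, hna, hbna, hba, negOp]
    · have hba : α.box ∉ Δ := fun hm => ha (sat_T h hm)
      have hna : α.neg ∈ Δ := sat_neg h ha
      by_cases hbn : (MF.neg α).box ∈ Δ <;>
        simp [vDeltaS4, ha, hna, hba, hbn, negOp]
  · -- box
    intro α
    by_cases hba : α.box ∈ Δ
    · have h2 : α.box.box ∈ Δ := sat_mp h (sat_thm h (S4Thm.axFour α)) hba
      by_cases ha : α ∈ Δ <;> simp [vDeltaS4, hba, h2, ha, boxOp]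
    · have h2 : α.box.box ∉ Δ := fun hm => hba (sat_T h hm)
      by_cases ha : α ∈ Δ <;> simp [vDeltaS4, hba, h2, ha, boxOp]
  · -- implication
    intro α β
    by_cases hba : α.box ∈ Δ
    · have ha : α ∈ Δ := sat_T h hba
      by_cases hbb : β.box ∈ Δ
      · have h5 : (α.imp β).box ∈ Δ := sat_boxImp h hbb
        simp [vDeltaS4, hba, hbb, h5, impOp]
      · by_cases hb : β ∈ Δ
        · have h5 : α.imp β ∈ Δ := sat_impR h hb
          have h6 : (α.imp β).box ∉ Δ := fun hm =>
            hbb (sat_mp h (sat_mp h (sat_thm h (S4Thm.axK α β)) hm) hba)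
          simp [vDeltaS4, hba, hbb, hb, h5, h6, impOp]
        · have h5 : α.imp β ∉ Δ := fun hm => hb (sat_mp h hm ha)
          have h6 : (α.imp β).box ∉ Δ := fun hm => h5 (sat_T h hm)
          simp [vDeltaS4, hba, hbb, hb, h5, h6, impOp]
    · by_cases ha : α ∈ Δ
      · by_cases hbb : β.box ∈ Δ
        · have h5 : (α.imp β).box ∈ Δ := sat_boxImp h hbb
          simp [vDeltaS4, hba, ha, hbb, h5, impOp]
        · by_cases hb : β ∈ Δ
          · have h5 : α.imp β ∈ Δ := sat_impR h hb
            by_cases h6 : (α.imp β).box ∈ Δ <;>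
              simp [vDeltaS4, hba, ha, hbb, hb, h5, h6, impOp]
          · have h5 : α.imp β ∉ Δ := fun hm => hb (sat_mp h hm ha)
            have h6 : (α.imp β).box ∉ Δ := fun hm => h5 (sat_T h hm)
            simp [vDeltaS4, hba, ha, hbb, hb, h5, h6, impOp]
      · have h5 : α.imp β ∈ Δ := sat_impL h ha
        by_cases hbb : β.box ∈ Δ
        · have h6 : (α.imp β).box ∈ Δ := sat_boxImp h hbb
          simp [vDeltaS4, hba, ha, hbb, h5, h6, impOp]
        · by_cases hb : β ∈ Δ <;>
            [skip; skip] <;>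
            (by_cases h6 : (α.imp β).box ∈ Δ <;>
              simp [vDeltaS4, hba, ha, hbb, hb, h5, h6, impOp, *])
  · -- disjunction
    intro α β
    by_cases hba : α.box ∈ Δ
    · have ha : α ∈ Δ := sat_T h hba
      have h6 : (α.dis β).box ∈ Δ := sat_boxDisL h hba
      by_cases hbb : β.box ∈ Δ <;> by_cases hb : β ∈ Δ <;>
        simp [vDeltaS4, hba, ha, hbb, hb, h6, disOp]
    · by_cases hbb : β.box ∈ Δ
      · have hb : β ∈ Δ := sat_T h hbb
        have h6 : (α.dis β).box ∈ Δ := sat_boxDisR h hbb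
        by_cases ha : α ∈ Δ <;> simp [vDeltaS4, hba, ha, hbb, hb, h6, disOp]
      · by_cases ha : α ∈ Δ
        · have h5 : α.dis β ∈ Δ := sat_disL h ha
          by_cases hb : β ∈ Δ <;> by_cases h6 : (α.dis β).box ∈ Δ <;>
            simp [vDeltaS4, hba, ha, hbb, hb, h5, h6, disOp]
        · by_cases hb : β ∈ Δ
          · have h5 : α.dis β ∈ Δ := sat_disR h hb
            by_cases h6 : (α.dis β).box ∈ Δ <;>
              simp [vDeltaS4, hba, ha, hbb, hb, h5, h6, disOp]
          · have h5 : α.dis β ∉ Δ := sat_notDis h ha hb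
            have h6 : (α.dis β).box ∉ Δ := fun hm => h5 (sat_T h hm)
            simp [vDeltaS4, hba, ha, hbb, hb, h5, h6, disOp]
  · -- conjunction
    intro α β
    by_cases ha : α ∈ Δ
    · by_cases hb : β ∈ Δ
      · have h5 : α.con β ∈ Δ := sat_con h ha hb
        by_cases hba : α.box ∈ Δ
        · by_cases hbb : β.box ∈ Δ
          · have h6 : (α.con β).box ∈ Δ := sat_boxCon h hba hbb
            simp [vDeltaS4, hba, ha, hbb, hb, h5, h6, conOp]
          · have h6 : (α.con β).box ∉ Δ := fun hm => hbb (sat_boxConR h hm)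
            simp [vDeltaS4, hba, ha, hbb, hb, h5, h6, conOp]
        · have h6 : (α.con β).box ∉ Δ := fun hm => hba (sat_boxConL h hm)
          by_cases hbb : β.box ∈ Δ <;>
            simp [vDeltaS4, hba, ha, hbb, hb, h5, h6, conOp]
      · have hbb : β.box ∉ Δ := fun hm => hb (sat_T h hm)
        have h5 : α.con β ∉ Δ := fun hm => hb (sat_conR h hm)
        have h6 : (α.con β).box ∉ Δ := fun hm => h5 (sat_T h hm)
        by_cases hba : α.box ∈ Δ <;>
          simp [vDeltaS4, hba, ha, hbb, hb, h5, h6, conOp]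
    · have hba : α.box ∉ Δ := fun hm => ha (sat_T h hm)
      have h5 : α.con β ∉ Δ := fun hm => ha (sat_conL h hm)
      have h6 : (α.con β).box ∉ Δ := fun hm => h5 (sat_T h hm)
      by_cases hbb : β.box ∈ Δ <;> by_cases hb : β ∈ Δ <;>
        simp [vDeltaS4, hba, ha, hbb, hb, h5, h6, conOp]
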